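/- There is no self-orthogonal quantum Latin square of dimension 3. -/

import Mathlib

noncomputable section

/-- The inner product on a complex inner product space, as a function into `ℂ`. -/
def ip {E : Type*} [NormedAddCommGroup E] [InnerProductSpace ℂ E] (x y : E) : ℂ :=
  inner ℂ x y

/-- Entrywise complex conjugation of a vector in `ℂ^ι` (in the standard basis). -/
def conjE {ι : Type*} [Fintype ι] (v : EuclideanSpace ℂ ι) : EuclideanSpace ℂ ι :=
  WithLp.toLp 2 (fun k => star (v k))

/-- A quantum Latin square of dimension `d`: a `d × d` array of vectors in `ℂ^d`
whose rows and columns are orthonormal bases (orthonormal families of `d` vectors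
in the `d`-dimensional space `ℂ^d`). -/
def IsQLS {d : ℕ} (Φ : Fin d → Fin d → EuclideanSpace ℂ (Fin d)) : Prop :=
  (∀ i, Orthonormal ℂ (Φ i)) ∧ (∀ j, Orthonormal ℂ (fun i => Φ i j))

/-- Two `d × d` arrays of vectors are orthogonal quantum Latin squares:
`⟨Φ_{i,j},Φ_{i',j'}⟩⟨Ψ_{i,j},Ψ_{i',j'}⟩ = δ_{ii'}δ_{jj'}`, i.e. the tensor products
`Φ_{i,j} ⊗ Ψ_{i,j}` form an orthonormal basis of `ℂ^d ⊗ ℂ^d`. -/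
def OrthQLS {d : ℕ} (Φ Ψ : Fin d → Fin d → EuclideanSpace ℂ (Fin d)) : Prop :=
  ∀ i j i' j', ip (Φ i j) (Φ i' j') * ip (Ψ i j) (Ψ i' j') =
    if i = i' ∧ j = j' then 1 else 0

/-- A self-orthogonal quantum Latin square: a quantum Latin square that is
orthogonal to its conjugate transpose, i.e.
`⟨Φ_{i,j},Φ_{i',j'}⟩ ⋅ conj ⟨Φ_{j,i},Φ_{j',i'}⟩ = δ_{ii'}δ_{jj'}`
(the vectors `Φ_{i,j} ⊗ conj (Φ_{j,i})` form an orthonormal basis of `ℂ^d ⊗ ℂ^d`). -/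
def IsSOQLS {d : ℕ} (Φ : Fin d → Fin d → EuclideanSpace ℂ (Fin d)) : Prop :=
  IsQLS Φ ∧ OrthQLS Φ (fun i j => conjE (Φ j i))

lemma ip_conjE_conjE {ι : Type*} [Fintype ι] (x y : EuclideanSpace ℂ ι) :
    ip (conjE x) (conjE y) = starRingEnd ℂ (ip x y) := by
  simp [ip, conjE, PiLp.inner_apply, map_sum, mul_comm]

lemma no_four_orthonormal (a b c v : EuclideanSpace ℂ (Fin 3))
    (ha : ‖a‖ = 1) (hb : ‖b‖ = 1) (hc : ‖c‖ = 1) (hv : ‖v‖ = 1)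
    (hab : ip a b = 0) (hac : ip a c = 0) (hav : ip a v = 0)
    (hbc : ip b c = 0) (hbv : ip b v = 0) (hcv : ip c v = 0) : False := by
  simp only [ip] at hab hac hav hbc hbv hcv
  have horth : Orthonormal ℂ ![a, b, c, v] := by
    rw [orthonormal_iff_ite]
    have sab := inner_eq_zero_symm.mp hab
    have sac := inner_eq_zero_symm.mp hac
    have sav := inner_eq_zero_symm.mp hav
    have sbc := inner_eq_zero_symm.mp hbc
    have sbv := inner_eq_zero_symm.mp hbv
    have scv := inner_eq_zero_symm.mp hcv
    intro i j
    fin_cases i <;> fin_cases j <;>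
      simp_all [inner_self_eq_norm_sq_to_K, ha, hb, hc, hv]
  have hle := horth.linearIndependent.fintype_card_le_finrank
  rw [finrank_euclideanSpace_fin] at hle
  simp at hle

/-- There is no self-orthogonal quantum Latin square of dimension 3. -/
theorem no_soqls_dim_three :
    ¬ ∃ Φ : Fin 3 → Fin 3 → EuclideanSpace ℂ (Fin 3), IsSOQLS Φ := by
  rintro ⟨Φ, ⟨⟨hrow, hcol⟩, horth⟩⟩
  have norm1 : ∀ i j, ‖Φ i j‖ = 1 := fun i j => (hrow i).1 j
  -- diagonal off-diagonal orthogonality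
  have hdiag : ∀ i j : Fin 3, i ≠ j → ip (Φ i i) (Φ j j) = 0 := by
    intro i j hij
    have h := horth i i j j
    rw [ip_conjE_conjE] at h
    rw [if_neg (by tauto)] at h
    rcases mul_eq_zero.mp h with h' | h'
    · exact h'
    · simpa using h'
  have h01 : ip (Φ 0 1) (Φ 2 2) * starRingEnd ℂ (ip (Φ 1 0) (Φ 2 2)) = 0 := by
    have h := horth 0 1 2 2
    rw [ip_conjE_conjE] at h
    rw [if_neg (by decide)] at h
    exact h
  rcases mul_eq_zero.mp h01 with h | h
  · -- Φ 0 1 orthogonal to all diagonal entries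
    refine no_four_orthonormal (Φ 0 0) (Φ 1 1) (Φ 2 2) (Φ 0 1)
      (norm1 0 0) (norm1 1 1) (norm1 2 2) (norm1 0 1)
      (hdiag 0 1 (by decide)) (hdiag 0 2 (by decide)) ?_
      (hdiag 1 2 (by decide)) ?_ ?_
    · exact (hrow 0).2 (show (0 : Fin 3) ≠ 1 by decide)
    · exact (hcol 1).2 (show (1 : Fin 3) ≠ 0 by decide)
    · exact inner_eq_zero_symm.mp h
  · have h' : ip (Φ 1 0) (Φ 2 2) = 0 := by simpa using h
    refine no_four_orthonormal (Φ 0 0) (Φ 1 1) (Φ 2 2) (Φ 1 0)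
      (norm1 0 0) (norm1 1 1) (norm1 2 2) (norm1 1 0)
      (hdiag 0 1 (by decide)) (hdiag 0 2 (by decide)) ?_
      (hdiag 1 2 (by decide)) ?_ ?_
    · exact (hcol 0).2 (show (0 : Fin 3) ≠ 1 by decide)
    · exact (hrow 1).2 (show (1 : Fin 3) ≠ 0 by decide)
    · exact inner_eq_zero_symm.mp h'
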